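/- Assume a ≠ 1, let θ > 0 with θ ≠ 1 and θ ≠ −ln b/ln a, and let I₀(y) = y^{−θ} for y > 0. Set δ = (1+b)/(c^{θ}·(a^{−θ} + b)). Then I₁(y) = δ·y^{−θ} is an inverse marginal function satisfying the functional equation I₁(a·y) + b·I₁(y) = (1+b)·I₀(c·y) for all y > 0, and it is the unique inverse marginal function doing so: any inverse marginal function Ĩ satisfying Ĩ(a·y) + b·Ĩ(y) = (1+b)·I₀(c·y) for all y > 0 coincides with I₁ on (0,∞). -/

import Mathlib

open Set Filter

noncomputable section

/-- A utility function: `C²` on `(0,∞)`, strictly increasing and strictly concave there,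
satisfying the Inada conditions. -/
def IsUtility (U : ℝ → ℝ) : Prop :=
  ContDiffOn ℝ 2 U (Set.Ioi 0) ∧
  (∀ x > 0, 0 < deriv U x) ∧
  (∀ x > 0, deriv (deriv U) x < 0) ∧
  Tendsto (deriv U) (nhdsWithin 0 (Set.Ioi 0)) atTop ∧
  Tendsto (deriv U) atTop (nhds 0)

/-- An inverse marginal function: positive, `C¹` on `(0,∞)`, strictly decreasing derivative,
with `I(∞)=0` and `I(0+)=∞`. -/
def IsInvMarginal (I : ℝ → ℝ) : Prop :=
  (∀ y > 0, 0 < I y) ∧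
  ContDiffOn ℝ 1 I (Set.Ioi 0) ∧
  (∀ y > 0, deriv I y < 0) ∧
  Tendsto I atTop (nhds 0) ∧
  Tendsto I (nhdsWithin 0 (Set.Ioi 0)) atTop

/-- `I` is the inverse of the marginal `U'` on the positive reals: `I = (U')⁻¹`. -/
def InvMarginalOf (I U : ℝ → ℝ) : Prop :=
  (∀ x > 0, I (deriv U x) = x) ∧ (∀ y > 0, 0 < I y ∧ deriv U (I y) = y)

/-- `J` is the inverse function of `I` on the positive reals. -/
def IsInverseOf (J I : ℝ → ℝ) : Prop :=
  (∀ y > 0, J (I y) = y) ∧ (∀ x > 0, 0 < J x ∧ I (J x) = x)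

/-- The single-period inverse investment problem:
`U₀(x) = sup {p·U₁(x+π(u−1)) + (1−p)·U₁(x+π(d−1)) : −x/(u−1) ≤ π ≤ x/(1−d)}` for all `x > 0`. -/
def SPIIP (u d p : ℝ) (U₀ U₁ : ℝ → ℝ) : Prop :=
  ∀ x > 0, U₀ x =
    sSup ((fun pi => p * U₁ (x + pi * (u - 1)) + (1 - p) * U₁ (x + pi * (d - 1))) ''
      Set.Icc (-(x / (u - 1))) (x / (1 - d)))

set_option maxHeartbeats 1000000 in
/-- For the power initial datum `I₀(y) = y^{−θ}` (with `θ > 0`, `θ ≠ 1`,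
`θ ≠ −log_a b`) and `δ = (1+b)/(c^θ·(a^{−θ}+b))`, the function `I₁(y) = δ·y^{−θ}` is an inverse
marginal function solving the functional equation, and it is the unique inverse marginal
function doing so. -/
theorem stmt17
    (u d p q a b c θ δ : ℝ)
    (hu : 1 < u) (hd0 : 0 < d) (hd1 : d < 1) (hp0 : 0 < p) (hp1 : p < 1)
    (hq : q = (1 - d) / (u - d)) (ha : a = ((1 - p) * q) / (p * (1 - q)))
    (hb : b = (1 - q) / q) (hc : c = (1 - p) / (1 - q))
    (ha1 : a ≠ 1)
    (hθ0 : 0 < θ) (hθ1 : θ ≠ 1) (hθ2 : θ ≠ -(Real.log b / Real.log a))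
    (hδ : δ = (1 + b) / (c ^ θ * (a ^ (-θ) + b))) :
    IsInvMarginal (fun y => δ * y ^ (-θ)) ∧
    (∀ y > 0, δ * (a * y) ^ (-θ) + b * (δ * y ^ (-θ)) = (1 + b) * (c * y) ^ (-θ)) ∧
    (∀ Itil : ℝ → ℝ, IsInvMarginal Itil →
      (∀ y > 0, Itil (a * y) + b * Itil y = (1 + b) * (c * y) ^ (-θ)) →
      ∀ y > 0, Itil y = δ * y ^ (-θ)) := by
  -- basic positivity
  have hud : 0 < u - d := by linarith
  have hq0 : 0 < q := by rw [hq]; exact div_pos (by linarith) hud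
  have hq1 : q < 1 := by rw [hq, div_lt_one hud]; linarith
  have hp1' : 0 < 1 - p := by linarith
  have hq1' : 0 < 1 - q := by linarith
  have ha0 : 0 < a := by rw [ha]; positivity
  have hb0 : 0 < b := by rw [hb]; positivity
  have hc0 : 0 < c := by rw [hc]; positivity
  have hcθ : (0:ℝ) < c ^ θ := Real.rpow_pos_of_pos hc0 θ
  have haθ0 : (0:ℝ) < a ^ (-θ) := Real.rpow_pos_of_pos ha0 _
  have hδ0 : 0 < δ := by
    rw [hδ]; exact div_pos (by linarith) (mul_pos hcθ (by linarith))
  have hfeq : ∀ y > 0, δ * (a * y) ^ (-θ) + b * (δ * y ^ (-θ)) = (1 + b) * (c * y) ^ (-θ) := by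
    intro y hy
    rw [Real.mul_rpow ha0.le hy.le, Real.mul_rpow hc0.le hy.le, hδ, Real.rpow_neg hc0.le]
    field_simp
  refine ⟨⟨?_, ?_, ?_, ?_, ?_⟩, hfeq, ?_⟩
  · intro y hy
    exact mul_pos hδ0 (Real.rpow_pos_of_pos hy _)
  · exact ContDiffOn.mul contDiffOn_const
      (fun y hy => (Real.contDiffAt_rpow_const_of_ne (ne_of_gt hy)).contDiffWithinAt)
  · intro y hy
    have h : HasDerivAt (fun y : ℝ => δ * y ^ (-θ)) (δ * (-θ * y ^ (-θ - 1))) y :=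
      (Real.hasDerivAt_rpow_const (Or.inl hy.ne')).const_mul δ
    rw [h.deriv]
    have hpos := Real.rpow_pos_of_pos hy (-θ - 1)
    nlinarith [mul_pos hδ0 (mul_pos hθ0 hpos)]
  · have := (tendsto_rpow_neg_atTop hθ0).const_mul δ
    simpa using this
  · have h1 : Tendsto (fun y : ℝ => (y⁻¹) ^ θ) (nhdsWithin 0 (Set.Ioi 0)) atTop :=
      (tendsto_rpow_atTop hθ0).comp tendsto_inv_nhdsGT_zero
    have h2 : Tendsto (fun y : ℝ => y ^ (-θ)) (nhdsWithin 0 (Set.Ioi 0)) atTop := by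
      refine h1.congr' ?_
      filter_upwards [self_mem_nhdsWithin] with y hy
      rw [Real.inv_rpow (le_of_lt hy), ← Real.rpow_neg (le_of_lt (show (0:ℝ) < y from hy))]
    exact Tendsto.const_mul_atTop hδ0 h2
  · intro Itil hIM heq0
    obtain ⟨_, hcd, hder, _, _⟩ := hIM
    have heq : ∀ y > 0, Itil (a * y) + b * Itil y
        = δ * (a * y) ^ (-θ) + b * (δ * y ^ (-θ)) := by
      intro y hy
      rw [heq0 y hy, hfeq y hy]
    clear heq0 hfeq hq ha hb hc hδ hu hd0 hd1 hp0 hp1 hud hq0 hq1 hp1' hq1' hθ1 hcθ hc0 c u d p q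
    set g : ℝ → ℝ := fun y => Itil y - δ * y ^ (-θ) with hgdef
    have hstep : ∀ y > 0, g (a * y) = -b * g y := by
      intro y hy
      simp only [hgdef]
      linear_combination heq y hy
    have hanti : StrictAntiOn Itil (Set.Ioi 0) :=
      strictAntiOn_of_deriv_neg (convex_Ioi 0) hcd.continuousOn
        (by rw [interior_Ioi]; exact fun x hx => hder x hx)
    have haθ : (0:ℝ) < a ^ (-θ) := Real.rpow_pos_of_pos ha0 _
    have hla : Real.log a ≠ 0 := by
      simp only [ne_eq, Real.log_eq_zero]
      push_neg
      exact ⟨ha0.ne', ha1, by linarith⟩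
    have hane : a ^ (-θ) ≠ 1 := by
      intro h
      have h2 := congrArg Real.log h
      rw [Real.log_rpow ha0, Real.log_one] at h2
      have : Real.log a = 0 := by
        rcases mul_eq_zero.1 h2 with h3 | h3
        · exact absurd h3 (by simp [hθ0.ne'])
        · exact h3
      exact hla this
    set C₁ : ℝ := δ * |1 - a ^ (-θ)| / (1 + b) with hC₁def
    have hC₁ : 0 < C₁ := by
      apply div_pos (mul_pos hδ0 (abs_pos.2 (by intro h; apply hane; linarith))) (by linarith)
    set K : ℝ := max C₁ (C₁ * a ^ (-θ) / b) with hKdef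
    have hKC : C₁ ≤ K := le_max_left _ _
    have hKC2 : C₁ * a ^ (-θ) / b ≤ K := le_max_right _ _
    have hK : 0 < K := lt_of_lt_of_le hC₁ hKC
    have hbd : ∀ y > 0, |g y| ≤ K * y ^ (-θ) := by
      have emul : ∀ y : ℝ, 0 < y → (a * y) ^ (-θ) = a ^ (-θ) * y ^ (-θ) :=
        fun y hy => Real.mul_rpow ha0.le hy.le
      rcases ha1.lt_or_gt with hlt | hgt
      · -- a < 1 : a ^ (-θ) > 1, upper bound g y ≤ C₁ y^{-θ}
        have haθ1 : 1 < a ^ (-θ) :=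
          Real.one_lt_rpow_iff_of_pos ha0 |>.2 (Or.inr ⟨hlt, by linarith⟩)
        have habs : |1 - a ^ (-θ)| = a ^ (-θ) - 1 := by
          rw [abs_of_neg (by linarith)]; ring
        have hup : ∀ y > 0, g y ≤ C₁ * y ^ (-θ) := by
          intro y hy
          have hay : 0 < a * y := mul_pos ha0 hy
          have h1 : Itil y < Itil (a * y) :=
            hanti (mem_Ioi.2 hay) (mem_Ioi.2 hy) (by nlinarith)
          have e3 := emul y hy
          have e4 := hstep y hy
          have hyθ : (0:ℝ) < y ^ (-θ) := Real.rpow_pos_of_pos hy _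
          have e1 : Itil (a * y) = g (a * y) + δ * (a * y) ^ (-θ) := by simp [hgdef]
          have e2 : Itil y = g y + δ * y ^ (-θ) := by simp [hgdef]
          rw [hC₁def, habs]
          rw [e1, e2, e3, e4] at h1
          rw [div_mul_eq_mul_div, le_div_iff₀ (by linarith : (0:ℝ) < 1 + b)]
          nlinarith
        intro y hy
        have hay : 0 < a * y := mul_pos ha0 hy
        have hyθ : (0:ℝ) < y ^ (-θ) := Real.rpow_pos_of_pos hy _
        have hlow : -(C₁ * a ^ (-θ) / b) * y ^ (-θ) ≤ g y := by
          have := hup (a * y) hay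
          rw [hstep y hy, emul y hy] at this
          rw [neg_mul, neg_le, div_mul_eq_mul_div, le_div_iff₀ hb0]
          nlinarith
        rw [abs_le]
        constructor
        · calc -(K * y ^ (-θ)) ≤ -(C₁ * a ^ (-θ) / b) * y ^ (-θ) := by nlinarith
            _ ≤ g y := hlow
        · calc g y ≤ C₁ * y ^ (-θ) := hup y hy
            _ ≤ K * y ^ (-θ) := by nlinarith
      · -- 1 < a : a ^ (-θ) < 1, lower bound -(C₁ y^{-θ}) ≤ g y
        have haθ1 : a ^ (-θ) < 1 :=
          Real.rpow_lt_one_of_one_lt_of_neg hgt (by linarith)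
        have habs : |1 - a ^ (-θ)| = 1 - a ^ (-θ) := abs_of_pos (by linarith)
        have hlow : ∀ y > 0, -(C₁ * y ^ (-θ)) ≤ g y := by
          intro y hy
          have hay : 0 < a * y := mul_pos ha0 hy
          have h1 : Itil (a * y) < Itil y :=
            hanti (mem_Ioi.2 hy) (mem_Ioi.2 hay) (by nlinarith)
          have e3 := emul y hy
          have e4 := hstep y hy
          have hyθ : (0:ℝ) < y ^ (-θ) := Real.rpow_pos_of_pos hy _
          have e1 : Itil (a * y) = g (a * y) + δ * (a * y) ^ (-θ) := by simp [hgdef]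
          have e2 : Itil y = g y + δ * y ^ (-θ) := by simp [hgdef]
          rw [hC₁def, habs]
          rw [e1, e2, e3, e4] at h1
          rw [neg_le, div_mul_eq_mul_div, le_div_iff₀ (by linarith : (0:ℝ) < 1 + b)]
          nlinarith
        intro y hy
        have hay : 0 < a * y := mul_pos ha0 hy
        have hyθ : (0:ℝ) < y ^ (-θ) := Real.rpow_pos_of_pos hy _
        have hup : g y ≤ C₁ * a ^ (-θ) / b * y ^ (-θ) := by
          have := hlow (a * y) hay
          rw [hstep y hy, emul y hy] at this
          rw [div_mul_eq_mul_div, le_div_iff₀ hb0]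
          nlinarith
        rw [abs_le]
        constructor
        · calc -(K * y ^ (-θ)) ≤ -(C₁ * y ^ (-θ)) := by nlinarith
            _ ≤ g y := hlow y hy
        · calc g y ≤ C₁ * a ^ (-θ) / b * y ^ (-θ) := hup
            _ ≤ K * y ^ (-θ) := by nlinarith
    -- iteration
    have hiter : ∀ n : ℕ, ∀ y > 0, g (a ^ n * y) = (-b) ^ n * g y := by
      intro n
      induction n with
      | zero => intro y hy; simp
      | succ n ih =>
        intro y hy
        have h1 : a ^ (n + 1) * y = a * (a ^ n * y) := by ring
        rw [h1, hstep _ (by positivity), ih y hy, pow_succ]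
        ring
    have hpow : ∀ n : ℕ, ((a ^ n : ℝ)) ^ (-θ) = (a ^ (-θ)) ^ n := by
      intro n
      rw [← Real.rpow_natCast a n, ← Real.rpow_natCast (a ^ (-θ)) n,
        ← Real.rpow_mul ha0.le, ← Real.rpow_mul ha0.le, mul_comm]
    set r : ℝ := b * a ^ θ with hrdef
    have haθ' : (0:ℝ) < a ^ θ := Real.rpow_pos_of_pos ha0 _
    have hr0 : 0 < r := mul_pos hb0 haθ'
    have hinv : a ^ (-θ) = (a ^ θ)⁻¹ := Real.rpow_neg ha0.le θ
    have hr1 : r ≠ 1 := by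
      intro h
      apply hθ2
      have h2 := congrArg Real.log h
      rw [Real.log_mul hb0.ne' haθ'.ne', Real.log_rpow ha0, Real.log_one] at h2
      field_simp
      linarith
    -- two families of bounds
    have hbd1 : ∀ y > 0, ∀ n : ℕ, |g y| ≤ K * r⁻¹ ^ n * y ^ (-θ) := by
      intro y hy n
      have hay : 0 < a ^ n * y := by positivity
      have h1 := hbd (a ^ n * y) hay
      rw [hiter n y hy] at h1
      have h2 : |(-b) ^ n * g y| = b ^ n * |g y| := by
        rw [abs_mul, abs_pow, abs_neg, abs_of_pos hb0]
      rw [h2, Real.mul_rpow (by positivity) hy.le, hpow] at h1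
      have hbn : (0:ℝ) < b ^ n := by positivity
      have hrn : r⁻¹ ^ n = (a ^ (-θ)) ^ n / b ^ n := by
        rw [hrdef, hinv, mul_inv, mul_pow, div_eq_mul_inv, inv_pow]
        ring
      rw [hrn]
      have he : K * ((a ^ (-θ)) ^ n / b ^ n) * y ^ (-θ)
          = K * ((a ^ (-θ)) ^ n * y ^ (-θ)) / b ^ n := by ring
      rw [he, le_div_iff₀ hbn]
      calc |g y| * b ^ n = b ^ n * |g y| := by ring
        _ ≤ K * ((a ^ (-θ)) ^ n * y ^ (-θ)) := h1
    have hbd2 : ∀ y > 0, ∀ n : ℕ, |g y| ≤ K * r ^ n * y ^ (-θ) := by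
      intro y hy n
      have han : (0:ℝ) < a ^ n := by positivity
      set z : ℝ := y / a ^ n with hzdef
      have hz : 0 < z := by positivity
      have hyz : y = a ^ n * z := by rw [hzdef]; field_simp
      have h1 := hbd z hz
      have h2 : g y = (-b) ^ n * g z := by rw [hyz]; exact hiter n z hz
      have hzθ : z ^ (-θ) = (a ^ θ) ^ n * y ^ (-θ) := by
        rw [hyz, Real.mul_rpow han.le hz.le, hpow]
        rw [hinv, inv_pow]
        field_simp
      rw [h2, abs_mul, abs_pow, abs_neg, abs_of_pos hb0]
      calc b ^ n * |g z| ≤ b ^ n * (K * z ^ (-θ)) := by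
            apply mul_le_mul_of_nonneg_left h1 (by positivity)
        _ = K * r ^ n * y ^ (-θ) := by rw [hzθ, hrdef, mul_pow]; ring
    -- conclusion
    intro y hy
    have hyθ : (0:ℝ) < y ^ (-θ) := Real.rpow_pos_of_pos hy _
    have hzero : g y = 0 := by
      have habs : |g y| ≤ 0 := by
        rcases hr1.lt_or_gt with h | h
        · have htend : Tendsto (fun n : ℕ => K * r ^ n * y ^ (-θ)) atTop (nhds 0) := by
            have h0 := tendsto_pow_atTop_nhds_zero_of_lt_one hr0.le h
            have := (h0.const_mul K).mul_const (y ^ (-θ))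
            simpa using this
          exact ge_of_tendsto' htend (fun n => hbd2 y hy n)
        · have hri : r⁻¹ < 1 := by rw [inv_lt_one_iff₀]; right; exact h
          have htend : Tendsto (fun n : ℕ => K * r⁻¹ ^ n * y ^ (-θ)) atTop (nhds 0) := by
            have h0 := tendsto_pow_atTop_nhds_zero_of_lt_one (by positivity) hri
            have := (h0.const_mul K).mul_const (y ^ (-θ))
            simpa using this
          exact ge_of_tendsto' htend (fun n => hbd1 y hy n)
      exact abs_nonpos_iff.1 habs
    have : Itil y - δ * y ^ (-θ) = 0 := hzero
    linarith
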